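/- Quasi-matrix algebra: let G be a group, φ a 3-cocycle on G with values in k*, and |·|: {1,…,n} → G a grading function. Define on M_n(k) the product (α·β)^i_j = Σ_k α^i_k β^k_j · φ(|i|,|k|⁻¹,|k||j|⁻¹)/φ(|k|⁻¹,|k|,|j|⁻¹). Then this product satisfies (α·β)·γ restricted to homogeneous basis elements E_i^j (of degree |i||j|⁻¹) obeys (E_i^j · E_k^l) · E_m^n = φ(|i||j|⁻¹, |k||l|⁻¹, |m||n|⁻¹) E_i^j · (E_k^l · E_m^n), i.e. M_{n,φ} is a G-graded quasialgebra. -/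

import Mathlib

/-- The quasi-matrix product on `M_n(k)` twisted by a 3-cocycle `φ` on `G`,
relative to a grading function `d : Fin N → G`. -/
def qmul {G : Type*} [Group G] {k : Type*} [Field k] {N : ℕ}
    (φ : G → G → G → k) (d : Fin N → G)
    (A B : Matrix (Fin N) (Fin N) k) : Matrix (Fin N) (Fin N) k :=
  Matrix.of fun i j => ∑ m : Fin N,
    A i m * B m j * (φ (d i) (d m)⁻¹ (d m * (d j)⁻¹) / φ (d m)⁻¹ (d m) (d j)⁻¹)

lemma qmul_std {G : Type*} [Group G] {k : Type*} [Field k] {N : ℕ}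
    (φ : G → G → G → k) (d : Fin N → G) (i j p q : Fin N) (a b : k) :
    qmul φ d (Matrix.single i j a) (Matrix.single p q b)
      = if j = p then Matrix.single i q
          (a * b * (φ (d i) (d j)⁻¹ (d j * (d q)⁻¹) / φ (d j)⁻¹ (d j) (d q)⁻¹))
        else 0 := by
  ext u v
  simp only [qmul, Matrix.of_apply, Matrix.single, ite_and, ite_mul, mul_ite,
    zero_mul, mul_zero]
  rw [Finset.sum_eq_single j]
  · split_ifs <;> simp_all
  · intro m _ hm
    split_ifs with h1 h2 <;> simp_all
  · simp

lemma qmul_zero_left {G : Type*} [Group G] {k : Type*} [Field k] {N : ℕ}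
    (φ : G → G → G → k) (d : Fin N → G) (A : Matrix (Fin N) (Fin N) k) :
    qmul φ d 0 A = 0 := by
  ext u v; simp [qmul]

lemma qmul_zero_right {G : Type*} [Group G] {k : Type*} [Field k] {N : ℕ}
    (φ : G → G → G → k) (d : Fin N → G) (A : Matrix (Fin N) (Fin N) k) :
    qmul φ d A 0 = 0 := by
  ext u v; simp [qmul]

lemma phi_one_left {G : Type*} [Group G] {k : Type*} [Field k]
    (φ : G → G → G → k) (hne : ∀ x y z, φ x y z ≠ 0)
    (hcoc : ∀ x y z w : G,
      φ y z w * φ x (y * z) w * φ x y z = φ x y (z * w) * φ (x * y) z w)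
    (hnorm : ∀ x y : G, φ x 1 y = 1) (z w : G) : φ 1 z w = 1 := by
  have h := hcoc 1 1 z w
  simp only [hnorm, one_mul, mul_one] at h
  exact mul_left_cancel₀ (hne 1 z w) (h.trans (mul_one _).symm)

lemma key_scalar {G : Type*} [Group G] {k : Type*} [Field k]
    (φ : G → G → G → k) (hne : ∀ x y z, φ x y z ≠ 0)
    (hcoc : ∀ x y z w : G,
      φ y z w * φ x (y * z) w * φ x y z = φ x y (z * w) * φ (x * y) z w)
    (hnorm : ∀ x y : G, φ x 1 y = 1) (x y z w : G) :
    φ x y⁻¹ (y * z⁻¹) / φ y⁻¹ y z⁻¹ * (φ x z⁻¹ (z * w⁻¹) / φ z⁻¹ z w⁻¹)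
      = φ (x * y⁻¹) (y * z⁻¹) (z * w⁻¹) *
        (φ y z⁻¹ (z * w⁻¹) / φ z⁻¹ z w⁻¹) * (φ x y⁻¹ (y * w⁻¹) / φ y⁻¹ y w⁻¹) := by
  have hA := hcoc x y⁻¹ (y * z⁻¹) (z * w⁻¹)
  have hB := hcoc y⁻¹ y z⁻¹ (z * w⁻¹)
  simp only [inv_mul_cancel_left, mul_assoc, inv_mul_cancel, inv_mul_cancel_left] at hA hB
  rw [phi_one_left φ hne hcoc hnorm (z)⁻¹ (z * w⁻¹), mul_one] at hB
  have h6 := hne y⁻¹ y z⁻¹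
  have hD := hne z⁻¹ z w⁻¹
  have h3 := hne y⁻¹ y w⁻¹
  rw [div_mul_div_comm,
    show φ (x * y⁻¹) (y * z⁻¹) (z * w⁻¹) * (φ y z⁻¹ (z * w⁻¹) / φ z⁻¹ z w⁻¹) *
        (φ x y⁻¹ (y * w⁻¹) / φ y⁻¹ y w⁻¹)
      = φ (x * y⁻¹) (y * z⁻¹) (z * w⁻¹) * φ y z⁻¹ (z * w⁻¹) * φ x y⁻¹ (y * w⁻¹) /
        (φ z⁻¹ z w⁻¹ * φ y⁻¹ y w⁻¹) from by ring,
    div_eq_div_iff (mul_ne_zero h6 hD) (mul_ne_zero hD h3), ← hB]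
  linear_combination (φ y z⁻¹ (z * w⁻¹) * φ y⁻¹ y z⁻¹ * φ z⁻¹ z w⁻¹) * hA

/-- on matrix units, the twisted matrix product is quasi-associative with
associator `φ(|i||j|⁻¹, |p||q|⁻¹, |r||s|⁻¹)`, i.e. `M_{n,φ}` is a `G`-graded quasialgebra. -/
theorem stmt19 {G : Type*} [Group G] {k : Type*} [Field k] {N : ℕ}
    (φ : G → G → G → k) (hne : ∀ x y z, φ x y z ≠ 0)
    (hcoc : ∀ x y z w : G,
      φ y z w * φ x (y * z) w * φ x y z = φ x y (z * w) * φ (x * y) z w)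
    (hnorm : ∀ x y : G, φ x 1 y = 1)
    (d : Fin N → G) :
    ∀ i j p q r s : Fin N,
      qmul φ d (qmul φ d (Matrix.single i j (1 : k))
          (Matrix.single p q 1)) (Matrix.single r s 1)
        = φ (d i * (d j)⁻¹) (d p * (d q)⁻¹) (d r * (d s)⁻¹) •
          qmul φ d (Matrix.single i j 1)
            (qmul φ d (Matrix.single p q 1) (Matrix.single r s 1)) := by
  intro i j p q r s
  rw [qmul_std, qmul_std]
  by_cases hjp : j = p
  · subst hjp
    by_cases hqr : q = r
    · subst hqr
      simp only [eq_self_iff_true, if_true, ite_true]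
      rw [qmul_std, qmul_std]
      simp only [eq_self_iff_true, if_true, ite_true, Matrix.smul_single,
        smul_eq_mul]
      refine congrArg (Matrix.single i s) ?_
      linear_combination key_scalar φ hne hcoc hnorm (d i) (d j) (d q) (d s)
    · simp only [eq_self_iff_true, if_true, ite_true, if_neg hqr, qmul_zero_right,
        smul_zero]
      rw [qmul_std, if_neg hqr]
  · simp only [if_neg hjp, qmul_zero_left]
    by_cases hqr : q = r
    · subst hqr
      simp only [eq_self_iff_true, if_true, ite_true]
      rw [qmul_std, if_neg hjp, smul_zero]
    · simp only [if_neg hqr, qmul_zero_right, smul_zero]
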